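/- Let n, m, r be positive integers with r ≤ min(n, m), let U ∈ ℝ^{n×r} and V ∈ ℝ^{m×r} both have rank r, and suppose U^⊤U − V^⊤V = λ I_r for some λ ∈ ℝ. Set Z := U V^⊤ ∈ ℝ^{n×m}. Then: (a) P := U U^⊤ is positive semidefinite of rank r, commutes with Z Z^⊤, satisfies P² − λP = Z Z^⊤, and has the same column space (range) as Z Z^⊤; moreover P is the unique positive semidefinite matrix X ∈ ℝ^{n×n} with X² − λX = Z Z^⊤ and range(X) = range(Z Z^⊤). (b) Similarly, Q := V V^⊤ is positive semidefinite of rank r, satisfies Q² + λQ = Z^⊤ Z, has the same range as Z^⊤ Z, and is the unique positive semidefinite matrix X ∈ ℝ^{m×m} with X² + λX = Z^⊤ Z and range(X) = range(Z^⊤ Z). -/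

import Mathlib

open Matrix Module

namespace TwoLayerAux
set_option linter.unusedSectionVars false
set_option maxHeartbeats 1000000

variable {a b c d : Type*} [Fintype a] [Fintype b] [Fintype c] [Fintype d]

private lemma range_mul_le (A : Matrix a b ℝ) (B : Matrix b c ℝ) :
    LinearMap.range (A * B).mulVecLin ≤ LinearMap.range A.mulVecLin := by
  rw [Matrix.mulVecLin_mul]
  exact LinearMap.range_comp_le_range _ _

private lemma range_eq_of_factors (A : Matrix a b ℝ) (B : Matrix a c ℝ)
    (C : Matrix b c ℝ) (D : Matrix c b ℝ) (h1 : A * C = B) (h2 : B * D = A) :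
    LinearMap.range A.mulVecLin = LinearMap.range B.mulVecLin :=
  le_antisymm (h2 ▸ range_mul_le B D) (h1 ▸ range_mul_le A C)

private lemma mulVecLin_injective_of_rank {p q : ℕ} (A : Matrix (Fin p) (Fin q) ℝ)
    (hA : A.rank = q) : Function.Injective A.mulVecLin := by
  rw [← LinearMap.ker_eq_bot]
  have hrn := LinearMap.finrank_range_add_finrank_ker A.mulVecLin
  unfold Matrix.rank at hA
  rw [hA, Module.finrank_fintype_fun_eq_card, Fintype.card_fin] at hrn
  have : finrank ℝ (LinearMap.ker A.mulVecLin) = 0 := by omega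
  exact Submodule.finrank_eq_zero.mp this

private lemma posDef_transpose_mul_self {p q : ℕ} (A : Matrix (Fin p) (Fin q) ℝ)
    (hA : A.rank = q) : (Aᵀ * A).PosDef := by
  have hinj := mulVecLin_injective_of_rank A hA
  rw [posDef_iff_dotProduct_mulVec]
  constructor
  · rw [Matrix.IsHermitian, conjTranspose_eq_transpose_of_trivial, transpose_mul,
      transpose_transpose]
  · intro x hx
    have h1 : (Aᵀ * A) *ᵥ x = Aᵀ *ᵥ (A *ᵥ x) := (Matrix.mulVec_mulVec _ _ _).symm
    rw [star_trivial, h1, Matrix.dotProduct_mulVec, Matrix.vecMul_transpose]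
    have hnz : A *ᵥ x ≠ 0 := by
      intro h
      exact hx (hinj (by simpa using h))
    have hnn : 0 ≤ (A *ᵥ x) ⬝ᵥ (A *ᵥ x) :=
      Finset.sum_nonneg fun i _ => mul_self_nonneg _
    exact lt_of_le_of_ne hnn (Ne.symm (mt dotProduct_self_eq_zero.mp hnz))

variable [DecidableEq a]

private lemma eq_of_mulVec_eq' {A B : Matrix a a ℝ}
    (h : ∀ v, A *ᵥ v = B *ᵥ v) : A = B := by
  ext i j
  have := congrFun (h (Pi.single j 1)) i
  simpa [Matrix.mulVec_single] using this

private lemma proj_fix {Pr M : Matrix a a ℝ}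
    (hPrPr : Pr * Pr = Pr)
    (hle : LinearMap.range M.mulVecLin ≤ LinearMap.range Pr.mulVecLin) :
    Pr * M = M := by
  apply eq_of_mulVec_eq'
  intro v
  obtain ⟨u, hu⟩ := hle ⟨v, rfl⟩
  simp only [Matrix.mulVecLin_apply] at hu
  rw [← Matrix.mulVec_mulVec, ← hu, Matrix.mulVec_mulVec, hPrPr]

open scoped MatrixOrder in
private lemma W_psd_sq {Pr S X : Matrix a a ℝ} {l : ℝ}
    (hPrt : Prᵀ = Pr) (hPrPr : Pr * Pr = Pr)
    (hS : S.PosSemidef) (hX : X.PosSemidef)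
    (heq : X ^ 2 - l • X = S)
    (hPrX : Pr * X = X) (hXPr : X * Pr = X)
    (hrange : LinearMap.range Pr.mulVecLin ≤ LinearMap.range X.mulVecLin) :
    ((2:ℝ) • X - l • Pr).PosSemidef ∧
      ((2:ℝ) • X - l • Pr) ^ 2 = (4:ℝ) • S + (l ^ 2) • Pr := by
  have hXt : Xᵀ = X := by
    rw [← conjTranspose_eq_transpose_of_trivial]; exact hX.1
  have hsq : ((2:ℝ) • X - l • Pr) ^ 2 = (4:ℝ) • S + (l ^ 2) • Pr := by
    rw [← heq, pow_two, pow_two, sub_mul, mul_sub, mul_sub]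
    simp only [smul_mul_assoc, mul_smul_comm, hPrX, hXPr, hPrPr]
    module
  refine ⟨posSemidef_iff_dotProduct_mulVec.mpr ⟨?_, ?_⟩, hsq⟩
  · show ((2:ℝ) • X - l • Pr)ᴴ = _
    rw [conjTranspose_eq_transpose_of_trivial]
    simp [transpose_sub, transpose_smul, hPrt, hXt]
  · intro v
    set s := CFC.sqrt X with hs
    have hss : s * s = X := CFC.sqrt_mul_sqrt_self X hX.nonneg
    have e1 : s * X = X * s := by rw [← hss, mul_assoc]
    have key1 : s * X * X * s = X * X * X := by
      calc s * X * X * s = X * s * X * s := by rw [e1]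
        _ = X * (s * X) * s := by rw [mul_assoc X s X]
        _ = X * (X * s) * s := by rw [e1]
        _ = X * X * (s * s) := by rw [← mul_assoc, mul_assoc (X * X)]
        _ = X * X * X := by rw [hss]
    have key2 : s * X * s = X * X := by
      calc s * X * s = X * s * s := by rw [e1]
        _ = X * (s * s) := by rw [mul_assoc]
        _ = X * X := by rw [hss]
    have hsSs : s * S * s = X * X * X - l • (X * X) := by
      rw [← heq, pow_two, mul_sub, sub_mul]
      rw [show s * (X * X) = s * X * X from (mul_assoc _ _ _).symm, key1]
      simp only [mul_smul_comm, smul_mul_assoc, key2]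
    have hM : X * ((2:ℝ) • X - l • (1 : Matrix a a ℝ)) * X = X * X * X + s * S * s := by
      rw [hsSs]
      simp only [mul_sub, sub_mul, mul_smul_comm, smul_mul_assoc, mul_one]
      module
    have hXXX : (X * X * X).PosSemidef := by
      have := hX.mul_mul_conjTranspose_same X
      rwa [hX.1] at this
    have hsSsPsd : (s * S * s).PosSemidef := by
      have := hS.mul_mul_conjTranspose_same s
      rwa [(CFC.sqrt_nonneg X).posSemidef.1] at this
    set w := Pr *ᵥ v with hw
    obtain ⟨u, hu⟩ := hrange ⟨v, rfl⟩
    simp only [Matrix.mulVecLin_apply] at hu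
    have hvPw : v ᵥ* Pr = w := by rw [← hPrt, Matrix.vecMul_transpose]
    have hPXP : Pr * (X * Pr) = X := by rw [hXPr, hPrX]
    have claim1 : v ⬝ᵥ X *ᵥ v = w ⬝ᵥ X *ᵥ w := by
      conv_lhs => rw [← hPXP, ← Matrix.mulVec_mulVec]
      rw [Matrix.dotProduct_mulVec, hvPw, ← Matrix.mulVec_mulVec]
    have claim2 : v ⬝ᵥ Pr *ᵥ v = w ⬝ᵥ w := by
      conv_lhs => rw [← hPrPr, ← Matrix.mulVec_mulVec]
      rw [Matrix.dotProduct_mulVec, hvPw]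
    have dot_shift : ∀ z, (X *ᵥ u) ⬝ᵥ z = u ⬝ᵥ X *ᵥ z := by
      intro z
      rw [show X *ᵥ u = u ᵥ* Xᵀ from (Matrix.vecMul_transpose _ _).symm,
        ← Matrix.dotProduct_mulVec, hXt]
    have main : v ⬝ᵥ ((2:ℝ) • X - l • Pr) *ᵥ v
        = u ⬝ᵥ (X * ((2:ℝ) • X - l • (1 : Matrix a a ℝ)) * X) *ᵥ u := by
      have lhs_eq : v ⬝ᵥ ((2:ℝ) • X - l • Pr) *ᵥ v
          = 2 * (w ⬝ᵥ X *ᵥ w) - l * (w ⬝ᵥ w) := by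
        rw [Matrix.sub_mulVec, Matrix.smul_mulVec, Matrix.smul_mulVec,
          dotProduct_sub, dotProduct_smul, dotProduct_smul, smul_eq_mul, smul_eq_mul,
          claim1, claim2]
      have rhs_eq : u ⬝ᵥ (X * ((2:ℝ) • X - l • (1 : Matrix a a ℝ)) * X) *ᵥ u
          = 2 * (w ⬝ᵥ X *ᵥ w) - l * (w ⬝ᵥ w) := by
        rw [← Matrix.mulVec_mulVec, ← Matrix.mulVec_mulVec, hu, ← dot_shift, hu,
          Matrix.sub_mulVec, Matrix.smul_mulVec, Matrix.smul_mulVec,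
          Matrix.one_mulVec, dotProduct_sub, dotProduct_smul, dotProduct_smul,
          smul_eq_mul, smul_eq_mul]
      rw [lhs_eq, rhs_eq]
    rw [star_trivial, main, hM, Matrix.add_mulVec, dotProduct_add]
    have h1 := hXXX.dotProduct_mulVec_nonneg u
    have h2 := hsSsPsd.dotProduct_mulVec_nonneg u
    rw [star_trivial] at h1 h2
    positivity

open scoped MatrixOrder in
private lemma key {n m r : ℕ} (U : Matrix (Fin n) (Fin r) ℝ) (V : Matrix (Fin m) (Fin r) ℝ)
    (hU : U.rank = r) (hV : V.rank = r) (l : ℝ)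
    (hbal : Uᵀ * U = Vᵀ * V + l • (1 : Matrix (Fin r) (Fin r) ℝ)) :
    (U * Uᵀ).PosSemidef ∧ (U * Uᵀ).rank = r ∧
      (U * Uᵀ) * (U * Vᵀ * (U * Vᵀ)ᵀ) = (U * Vᵀ * (U * Vᵀ)ᵀ) * (U * Uᵀ) ∧
      (U * Uᵀ) ^ 2 - l • (U * Uᵀ) = U * Vᵀ * (U * Vᵀ)ᵀ ∧
      LinearMap.range (U * Uᵀ).mulVecLin =
        LinearMap.range (U * Vᵀ * (U * Vᵀ)ᵀ).mulVecLin ∧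
      (∀ X : Matrix (Fin n) (Fin n) ℝ, X.PosSemidef →
        X ^ 2 - l • X = U * Vᵀ * (U * Vᵀ)ᵀ →
        LinearMap.range X.mulVecLin =
          LinearMap.range (U * Vᵀ * (U * Vᵀ)ᵀ).mulVecLin →
        X = U * Uᵀ) := by
  have hP : (U * Uᵀ).PosSemidef := by
    have := posSemidef_self_mul_conjTranspose U
    rwa [conjTranspose_eq_transpose_of_trivial] at this
  have hSpsd : (U * Vᵀ * (U * Vᵀ)ᵀ).PosSemidef := by
    have := posSemidef_self_mul_conjTranspose (U * Vᵀ)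
    rwa [conjTranspose_eq_transpose_of_trivial] at this
  have hrankP : (U * Uᵀ).rank = r := by rw [Matrix.rank_self_mul_transpose, hU]
  have hGdet : IsUnit (Uᵀ * U).det :=
    Matrix.isUnit_iff_isUnit_det _ |>.mp (posDef_transpose_mul_self U hU).isUnit
  have hHdet : IsUnit (Vᵀ * V).det :=
    Matrix.isUnit_iff_isUnit_det _ |>.mp (posDef_transpose_mul_self V hV).isUnit
  -- the equation for P
  have hS'' : U * Vᵀ * (U * Vᵀ)ᵀ = U * (Vᵀ * (V * Uᵀ)) := by
    simp [transpose_mul, Matrix.mul_assoc]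
  have heqP : (U * Uᵀ) ^ 2 - l • (U * Uᵀ) = U * Vᵀ * (U * Vᵀ)ᵀ := by
    have e : (U * Uᵀ) ^ 2 = U * Vᵀ * (U * Vᵀ)ᵀ + l • (U * Uᵀ) := by
      rw [pow_two, Matrix.mul_assoc, ← Matrix.mul_assoc Uᵀ U Uᵀ, hbal, hS'']
      simp [Matrix.add_mul, Matrix.mul_add, smul_mul_assoc, mul_smul_comm,
        Matrix.mul_assoc]
    rw [e, add_sub_cancel_right]
  have hcomm : (U * Uᵀ) * (U * Vᵀ * (U * Vᵀ)ᵀ) = (U * Vᵀ * (U * Vᵀ)ᵀ) * (U * Uᵀ) := by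
    rw [← heqP]
    simp only [pow_two, Matrix.mul_sub, Matrix.sub_mul, mul_smul_comm, smul_mul_assoc,
      Matrix.mul_assoc]
  -- the projection
  set Pr : Matrix (Fin n) (Fin n) ℝ := U * (Uᵀ * U)⁻¹ * Uᵀ with hPr
  have hPrU : Pr * U = U := by
    rw [hPr]
    simp only [Matrix.mul_assoc]
    rw [Matrix.nonsing_inv_mul _ hGdet, Matrix.mul_one]
  have hPrt : Prᵀ = Pr := by
    rw [hPr]
    simp [transpose_mul, Matrix.transpose_nonsing_inv, Matrix.mul_assoc]
  have hPrPr : Pr * Pr = Pr := by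
    rw [hPr]
    simp only [Matrix.mul_assoc]
    rw [← Matrix.mul_assoc Uᵀ U, Matrix.nonsing_inv_mul_cancel_left _ _ hGdet]
  have hPrP : Pr * (U * Uᵀ) = U * Uᵀ := by
    rw [← Matrix.mul_assoc, hPrU]
  have hPPr : (U * Uᵀ) * Pr = U * Uᵀ := by
    rw [hPr]
    simp only [Matrix.mul_assoc]
    rw [← Matrix.mul_assoc Uᵀ U, Matrix.mul_nonsing_inv_cancel_left _ _ hGdet]
  -- range facts
  have hrU_P : LinearMap.range U.mulVecLin = LinearMap.range (U * Uᵀ).mulVecLin := by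
    refine range_eq_of_factors U (U * Uᵀ) Uᵀ (U * (Uᵀ * U)⁻¹) rfl ?_
    simp only [Matrix.mul_assoc]
    rw [← Matrix.mul_assoc Uᵀ U, Matrix.mul_nonsing_inv _ hGdet, Matrix.mul_one]
  have hrU_S : LinearMap.range U.mulVecLin
      = LinearMap.range (U * Vᵀ * (U * Vᵀ)ᵀ).mulVecLin := by
    refine range_eq_of_factors U (U * Vᵀ * (U * Vᵀ)ᵀ) (Vᵀ * (U * Vᵀ)ᵀ)
      (U * ((Uᵀ * U)⁻¹ * (Vᵀ * V)⁻¹)) (Matrix.mul_assoc _ _ _).symm ?_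
    simp only [transpose_mul, transpose_transpose, Matrix.mul_assoc]
    rw [← Matrix.mul_assoc Uᵀ U, Matrix.mul_nonsing_inv_cancel_left _ _ hGdet,
      ← Matrix.mul_assoc Vᵀ V, Matrix.mul_nonsing_inv _ hHdet, Matrix.mul_one]
  have hrU_Pr : LinearMap.range U.mulVecLin = LinearMap.range Pr.mulVecLin := by
    refine range_eq_of_factors U Pr ((Uᵀ * U)⁻¹ * Uᵀ) U ?_ hPrU
    rw [hPr, Matrix.mul_assoc]
  refine ⟨hP, hrankP, hcomm, heqP, hrU_P.symm.trans hrU_S, ?_⟩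
  -- uniqueness
  intro X hXpsd hXeq hXrange
  have hXt : Xᵀ = X := by
    rw [← conjTranspose_eq_transpose_of_trivial]; exact hXpsd.1
  have hrXPr : LinearMap.range X.mulVecLin = LinearMap.range Pr.mulVecLin :=
    hXrange.trans (hrU_S.symm.trans hrU_Pr)
  have hPrX : Pr * X = X := proj_fix hPrPr (le_of_eq hrXPr)
  have hXPr : X * Pr = X := by
    have h := congrArg transpose hPrX
    rwa [transpose_mul, hXt, hPrt] at h
  obtain ⟨hWXpsd, hWXsq⟩ := W_psd_sq hPrt hPrPr hSpsd hXpsd hXeq hPrX hXPr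
    (le_of_eq hrXPr.symm)
  obtain ⟨hWPpsd, hWPsq⟩ := W_psd_sq hPrt hPrPr hSpsd hP heqP hPrP hPPr
    (le_of_eq (hrU_Pr.symm.trans hrU_P))
  have hW : (2:ℝ) • X - l • Pr = (2:ℝ) • (U * Uᵀ) - l • Pr :=
    (CFC.sq_eq_sq_iff _ _ hWXpsd.nonneg hWPpsd.nonneg).mp (by rw [hWXsq, hWPsq])
  have h2 : (2:ℝ) • X = (2:ℝ) • (U * Uᵀ) := by
    have := congrArg (· + l • Pr) hW
    simpa [sub_add_cancel] using this
  exact smul_right_injective _ (two_ne_zero) h2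

end TwoLayerAux

/-- For a relaxed-balanced full-rank two-layer factorization
`Z = U Vᵀ` with `UᵀU − VᵀV = λ I_r` and `r ≤ min(n,m)`:
`P = U Uᵀ` is the unique positive semidefinite solution of `X² − λX = Z Zᵀ` with
`range X = range (Z Zᵀ)` (and it has rank `r` and commutes with `Z Zᵀ`);
similarly `Q = V Vᵀ` is the unique positive semidefinite solution of `X² + λX = Zᵀ Z`
with `range X = range (Zᵀ Z)`. -/
theorem two_layer_relaxed_balanced_gram_characterization
    (n m r : ℕ) (hn : 0 < n) (hm : 0 < m) (hr : 0 < r)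
    (hrn : r ≤ n) (hrm : r ≤ m)
    (U : Matrix (Fin n) (Fin r) ℝ) (V : Matrix (Fin m) (Fin r) ℝ)
    (hU : U.rank = r) (hV : V.rank = r)
    (l : ℝ) (hbal : Uᵀ * U - Vᵀ * V = l • (1 : Matrix (Fin r) (Fin r) ℝ)) :
    -- (a) the matrix `P = U Uᵀ`
    ((U * Uᵀ).PosSemidef ∧ (U * Uᵀ).rank = r ∧
      (U * Uᵀ) * (U * Vᵀ * (U * Vᵀ)ᵀ) = (U * Vᵀ * (U * Vᵀ)ᵀ) * (U * Uᵀ) ∧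
      (U * Uᵀ) ^ 2 - l • (U * Uᵀ) = U * Vᵀ * (U * Vᵀ)ᵀ ∧
      LinearMap.range (U * Uᵀ).mulVecLin =
        LinearMap.range (U * Vᵀ * (U * Vᵀ)ᵀ).mulVecLin ∧
      (∀ X : Matrix (Fin n) (Fin n) ℝ, X.PosSemidef →
        X ^ 2 - l • X = U * Vᵀ * (U * Vᵀ)ᵀ →
        LinearMap.range X.mulVecLin =
          LinearMap.range (U * Vᵀ * (U * Vᵀ)ᵀ).mulVecLin →
        X = U * Uᵀ)) ∧
    -- (b) the matrix `Q = V Vᵀ`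
    ((V * Vᵀ).PosSemidef ∧ (V * Vᵀ).rank = r ∧
      (V * Vᵀ) ^ 2 + l • (V * Vᵀ) = (U * Vᵀ)ᵀ * (U * Vᵀ) ∧
      LinearMap.range (V * Vᵀ).mulVecLin =
        LinearMap.range ((U * Vᵀ)ᵀ * (U * Vᵀ)).mulVecLin ∧
      (∀ X : Matrix (Fin m) (Fin m) ℝ, X.PosSemidef →
        X ^ 2 + l • X = (U * Vᵀ)ᵀ * (U * Vᵀ) →
        LinearMap.range X.mulVecLin =
          LinearMap.range ((U * Vᵀ)ᵀ * (U * Vᵀ)).mulVecLin →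
        X = V * Vᵀ)) := by
  constructor
  · -- part (a)
    have hbalA : Uᵀ * U = Vᵀ * V + l • (1 : Matrix (Fin r) (Fin r) ℝ) := by
      have := eq_add_of_sub_eq hbal
      rwa [add_comm] at this
    exact TwoLayerAux.key U V hU hV l hbalA
  · -- part (b)
    have hbalB : Vᵀ * V = Uᵀ * U + (-l) • (1 : Matrix (Fin r) (Fin r) ℝ) := by
      rw [neg_smul, ← sub_eq_add_neg, ← hbal]
      abel
    obtain ⟨hQ, hrankQ, _, heqQ, hrangeQ, huniqQ⟩ := TwoLayerAux.key V U hV hU (-l) hbalB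
    have hZb : V * Uᵀ * (V * Uᵀ)ᵀ = (U * Vᵀ)ᵀ * (U * Vᵀ) := by
      simp [transpose_mul, Matrix.mul_assoc]
    rw [hZb] at heqQ hrangeQ
    rw [neg_smul, sub_neg_eq_add] at heqQ
    refine ⟨hQ, hrankQ, heqQ, hrangeQ, ?_⟩
    intro X hXpsd hXeq hXrange
    exact huniqQ X hXpsd (by rw [hZb, neg_smul, sub_neg_eq_add]; exact hXeq)
      (by rw [hZb]; exact hXrange)
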